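/- Let 𝒳, 𝒜 be nonempty finite types, α ∈ (0,1) ∪ (1,∞), p_X a strictly positive probability mass function on 𝒳, and p a strictly positive channel from 𝒳 to 𝒜. If q* is a strictly positive probability mass function on 𝒜 minimizing q ↦ Σ_x p_X(x) D_α(p(·|x) ‖ q) over strictly positive probability mass functions q on 𝒜 (Csiszár's mutual information objective), then there exists λ ∈ ℝ such that for every a ∈ 𝒜: Σ_x p_X(x) · p(a|x)^α q*(a)^{−α} / (Σ_{a'} p(a'|x)^α q*(a')^{1−α}) = λ. -/

import Mathlib

open Finset Real

/-- A probability mass function on a finite type. -/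
def IsPMF {Z : Type*} [Fintype Z] (p : Z → ℝ) : Prop :=
  (∀ z, 0 ≤ p z) ∧ ∑ z, p z = 1

/-- A channel from `X` to `A`: a family of pmfs on `A` indexed by `X`. -/
def IsChannel {X A : Type*} [Fintype X] [Fintype A] (W : X → A → ℝ) : Prop :=
  ∀ x, IsPMF (W x)

/-- Expected loss `Σ_{x,a} p_X(x) p_{A|X}(a|x) ℓ(x,a)`. -/
noncomputable def expLoss {X A : Type*} [Fintype X] [Fintype A]
    (pX : X → ℝ) (ℓ : X → A → ℝ) (W : X → A → ℝ) : ℝ :=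
  ∑ x, ∑ a, pX x * W x a * ℓ x a


theorem csiszar_minimizer_KKT
    {X A : Type*} [Fintype X] [Fintype A] [Nonempty X] [Nonempty A]
    (α : ℝ) (hα : α ∈ Set.Ioo (0 : ℝ) 1 ∪ Set.Ioi (1 : ℝ))
    (pX : X → ℝ) (hpX : IsPMF pX) (hpXpos : ∀ x, 0 < pX x)
    (p : X → A → ℝ) (hp : IsChannel p) (hppos : ∀ x a, 0 < p x a)
    (qstar : A → ℝ) (hqstar : IsPMF qstar) (hqstarpos : ∀ a, 0 < qstar a)
    (hmin : ∀ q : A → ℝ, IsPMF q → (∀ a, 0 < q a) →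
      (∑ x, pX x * ((1 / (α - 1)) * Real.log (∑ a, p x a ^ α * qstar a ^ (1 - α))))
        ≤ ∑ x, pX x * ((1 / (α - 1)) * Real.log (∑ a, p x a ^ α * q a ^ (1 - α)))) :
    ∃ lam : ℝ, ∀ a : A,
      (∑ x, pX x * (p x a ^ α * qstar a ^ (-α)) / ∑ a', p x a' ^ α * qstar a' ^ (1 - α))
        = lam := by
  classical
  have hα1 : α - 1 ≠ 0 := by
    rcases hα with h | h
    · exact sub_ne_zero.mpr (ne_of_lt h.2)
    · exact sub_ne_zero.mpr (ne_of_gt h)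
  set Z : X → ℝ := fun x => ∑ a', p x a' ^ α * qstar a' ^ (1 - α) with hZ
  have hZpos : ∀ x, 0 < Z x := fun x =>
    Finset.sum_pos (fun a' _ => mul_pos (rpow_pos_of_pos (hppos x a') α)
      (rpow_pos_of_pos (hqstarpos a') _)) ⟨Classical.arbitrary A, mem_univ _⟩
  set F : A → ℝ := fun a => ∑ x, pX x * (p x a ^ α * qstar a ^ (-α)) / Z x with hF
  suffices h : ∀ a b : A, F a = F b by
    exact ⟨F (Classical.arbitrary A), fun a => h a _⟩
  intro a b
  set c : A → ℝ := fun a' => (if a' = a then (1:ℝ) else 0) - (if a' = b then 1 else 0) with hc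
  have hcbd : ∀ a', |c a'| ≤ 1 := by
    intro a'
    simp only [hc]
    split_ifs <;> norm_num
  have hcsum : ∑ a', c a' = 0 := by
    simp only [hc]
    rw [Finset.sum_sub_distrib, Finset.sum_ite_eq' univ a (fun _ => (1:ℝ)),
      Finset.sum_ite_eq' univ b (fun _ => (1:ℝ))]
    simp
  set g : ℝ → ℝ := fun t => ∑ x, pX x *
    ((1 / (α - 1)) * Real.log (∑ a', p x a' ^ α * (qstar a' + t * c a') ^ (1 - α))) with hg
  -- local min at 0
  have hlocal : IsLocalMin g 0 := by
    rw [IsLocalMin, IsMinFilter]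
    rw [Metric.eventually_nhds_iff]
    refine ⟨min (qstar a) (qstar b), lt_min (hqstarpos a) (hqstarpos b), fun t ht => ?_⟩
    rw [Real.dist_eq, sub_zero] at ht
    have hta : |t| < qstar a := lt_of_lt_of_le ht (min_le_left _ _)
    have htb : |t| < qstar b := lt_of_lt_of_le ht (min_le_right _ _)
    have habs := abs_lt.mp hta
    have habs' := abs_lt.mp htb
    have hqt : ∀ a', 0 < qstar a' + t * c a' := by
      intro a'
      by_cases h1 : a' = a
      · by_cases h2 : a' = b
        · have hcv : c a' = 0 := by simp only [hc, if_pos h1, if_pos h2]; ring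
          rw [hcv]; simpa using hqstarpos a'
        · have hcv : c a' = 1 := by simp only [hc, if_pos h1, if_neg h2]; ring
          rw [hcv, h1, mul_one]; linarith [habs.1]
      · by_cases h2 : a' = b
        · have hcv : c a' = -1 := by simp only [hc, if_neg h1, if_pos h2]; ring
          rw [hcv, h2]; simp only [mul_neg, mul_one]; linarith [habs'.2]
        · have hcv : c a' = 0 := by simp only [hc, if_neg h1, if_neg h2]; ring
          rw [hcv]; simpa using hqstarpos a'

    have hqpmf : IsPMF (fun a' => qstar a' + t * c a') := by
      constructor
      · exact fun a' => (hqt a').le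
      · rw [Finset.sum_add_distrib, hqstar.2, ← Finset.mul_sum, hcsum]
        ring
    have := hmin (fun a' => qstar a' + t * c a') hqpmf hqt
    simpa [hg] using this
  -- derivative at 0
  have hderiv : HasDerivAt g (∑ x, pX x * ((1 / (α - 1)) *
      ((∑ a', p x a' ^ α * (c a' * (1 - α) * (qstar a' + 0 * c a') ^ (1 - α - 1))) /
        (∑ a', p x a' ^ α * (qstar a' + 0 * c a') ^ (1 - α))))) 0 := by
    apply HasDerivAt.fun_sum
    intro x _
    apply HasDerivAt.const_mul
    apply HasDerivAt.const_mul
    apply HasDerivAt.log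
    · apply HasDerivAt.fun_sum
      intro a' _
      exact (((hasDerivAt_mul_const (c a')).const_add (qstar a')).rpow_const
        (Or.inl (by simpa using (hqstarpos a').ne'))).const_mul _
    · apply ne_of_gt
      apply Finset.sum_pos (fun a' _ => mul_pos (rpow_pos_of_pos (hppos x a') α)
        (rpow_pos_of_pos (by simpa using hqstarpos a') _)) ⟨Classical.arbitrary A, mem_univ _⟩
  have hD0 := hlocal.hasDerivAt_eq_zero hderiv
  -- simplify derivative
  have hkey : (∑ x, pX x * ((1 / (α - 1)) *
      ((∑ a', p x a' ^ α * (c a' * (1 - α) * (qstar a' + 0 * c a') ^ (1 - α - 1))) /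
        (∑ a', p x a' ^ α * (qstar a' + 0 * c a') ^ (1 - α))))) = F b - F a := by
    simp only [hF, zero_mul, add_zero]
    rw [← Finset.sum_sub_distrib]
    apply Finset.sum_congr rfl
    intro x _
    have he : (1:ℝ) - α - 1 = -α := by ring
    rw [he]
    have hS : (∑ a', p x a' ^ α * (c a' * (1 - α) * qstar a' ^ (-α)))
        = (1 - α) * (p x a ^ α * qstar a ^ (-α) - p x b ^ α * qstar b ^ (-α)) := by
      have hterm : ∀ a' : A, p x a' ^ α * (c a' * (1 - α) * qstar a' ^ (-α))
          = (1 - α) * ((if a' = a then p x a' ^ α * qstar a' ^ (-α) else 0)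
            - (if a' = b then p x a' ^ α * qstar a' ^ (-α) else 0)) := by
        intro a'
        simp only [hc]
        split_ifs <;> ring
      rw [Finset.sum_congr rfl fun a' _ => hterm a', ← Finset.mul_sum,
        Finset.sum_sub_distrib, Finset.sum_ite_eq', Finset.sum_ite_eq']
      simp
    rw [hS]
    have hZx : Z x ≠ 0 := (hZpos x).ne'
    have : (∑ a', p x a' ^ α * qstar a' ^ (1 - α)) = Z x := rfl
    rw [this]
    field_simp
    ring
  rw [hkey] at hD0
  linarith
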